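/- Let T ∈ ℝ, let (X, μ) be a measure space, let ψ : X → ℝ be measurable with ψ(x) < −T for all x ∈ X, and let G : X → [0, +∞] be measurable. Let c be a positive Lebesgue-measurable function on (T, +∞) such that c(t)e^{−t} is decreasing with respect to t, and let K ∈ [0, +∞). Suppose that for all t₂, t₁ with T ≤ t₂ < t₁ < +∞ one has ∫_{{x : −t₁ ≤ ψ(x) < −t₂}} G·c(−ψ) dμ = K·∫_{t₂}^{t₁} c(s)e^{−s} ds. Then for every nonnegative Lebesgue-measurable function a on (T, +∞) and all t₂, t₁ with T ≤ t₂ < t₁ ≤ +∞ one has ∫_{{x : −t₁ ≤ ψ(x) < −t₂}} G·a(−ψ) dμ = K·∫_{t₂}^{t₁} a(s)e^{−s} ds, where for t₁ = +∞ the set {−t₁ ≤ ψ < −t₂} is understood as {ψ < −t₂}. -/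

import Mathlib

open MeasureTheory ENNReal

/-- If the `c`-weighted integrals of `G` over all sublevel annuli
`{-t₁ ≤ ψ < -t₂}` of `ψ` are proportional to `∫_{t₂}^{t₁} c(s)e^{-s} ds`
(with constant of proportionality `K < +∞`), then the same proportionality
holds for every nonnegative measurable gain `a` in place of `c`, including
`t₁ = +∞`. -/
theorem annuli_proportionality_transfer
    {X : Type*} [MeasurableSpace X] (μ : Measure X) (T : ℝ)
    (ψ : X → ℝ) (hψ_meas : Measurable ψ) (hψ : ∀ x, ψ x < -T)
    (G : X → ℝ≥0∞) (hG : Measurable G)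
    (c : ℝ → ℝ) (hc_meas : Measurable c)
    (hc_pos : ∀ t ∈ Set.Ioi T, 0 < c t)
    (hc_dec : AntitoneOn (fun t => c t * Real.exp (-t)) (Set.Ioi T))
    (K : ℝ≥0∞) (hK : K ≠ ⊤)
    (hyp : ∀ t₂ t₁ : ℝ, T ≤ t₂ → t₂ < t₁ →
      ∫⁻ x in {x | -t₁ ≤ ψ x ∧ ψ x < -t₂}, G x * ENNReal.ofReal (c (-ψ x)) ∂μ
        = K * ∫⁻ s in Set.Ioc t₂ t₁, ENNReal.ofReal (c s * Real.exp (-s))) :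
    ∀ a : ℝ → ℝ, Measurable a → (∀ s ∈ Set.Ioi T, 0 ≤ a s) →
      (∀ t₂ t₁ : ℝ, T ≤ t₂ → t₂ < t₁ →
        ∫⁻ x in {x | -t₁ ≤ ψ x ∧ ψ x < -t₂}, G x * ENNReal.ofReal (a (-ψ x)) ∂μ
          = K * ∫⁻ s in Set.Ioc t₂ t₁, ENNReal.ofReal (a s * Real.exp (-s))) ∧
      (∀ t₂ : ℝ, T ≤ t₂ →
        ∫⁻ x in {x | ψ x < -t₂}, G x * ENNReal.ofReal (a (-ψ x)) ∂μ
          = K * ∫⁻ s in Set.Ioi t₂, ENNReal.ofReal (a s * Real.exp (-s))) := by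
  intro a ha_meas ha_nonneg
  have hneg : Measurable fun x => -ψ x := hψ_meas.neg
  set D : X → ℝ≥0∞ := fun x => G x * ENNReal.ofReal (c (-ψ x)) with hDdef
  have hD_meas : Measurable D :=
    hG.mul (ENNReal.measurable_ofReal.comp (hc_meas.comp hneg))
  set g : ℝ → ℝ≥0∞ := fun s => ENNReal.ofReal (c s * Real.exp (-s)) with hgdef
  have hg_meas : Measurable g :=
    ENNReal.measurable_ofReal.comp (hc_meas.mul (Real.measurable_exp.comp measurable_neg))
  set ν₁ : Measure ℝ := (μ.withDensity D).map (fun x => -ψ x) with hν₁def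
  set w : Measure ℝ := volume.withDensity g with hwdef
  set ν₂ : Measure ℝ := (K • w).restrict (Set.Ioi T) with hν₂def
  -- values of ν₁ on intervals
  have hpre_Ioc : ∀ t₂ t₁ : ℝ, (fun x => -ψ x) ⁻¹' Set.Ioc t₂ t₁
      = {x | -t₁ ≤ ψ x ∧ ψ x < -t₂} := by
    intro t₂ t₁
    ext x
    simp only [Set.mem_preimage, Set.mem_Ioc, Set.mem_setOf_eq]
    constructor
    · rintro ⟨h1, h2⟩; exact ⟨by linarith, by linarith⟩
    · rintro ⟨h1, h2⟩; exact ⟨by linarith, by linarith⟩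
  have hν₁Ioc : ∀ t₂ t₁ : ℝ, ν₁ (Set.Ioc t₂ t₁)
      = ∫⁻ x in {x | -t₁ ≤ ψ x ∧ ψ x < -t₂}, D x ∂μ := by
    intro t₂ t₁
    rw [hν₁def, Measure.map_apply hneg measurableSet_Ioc, hpre_Ioc,
      withDensity_apply]
    exact (measurableSet_le measurable_const.neg hψ_meas).inter
      (measurableSet_lt hψ_meas measurable_const.neg)
  have hν₂Ioc : ∀ t₂ t₁ : ℝ, T ≤ t₂ → ν₂ (Set.Ioc t₂ t₁)
      = K * ∫⁻ s in Set.Ioc t₂ t₁, g s := by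
    intro t₂ t₁ ht₂
    have hsub : Set.Ioc t₂ t₁ ∩ Set.Ioi T = Set.Ioc t₂ t₁ :=
      Set.inter_eq_left.mpr (fun s hs => lt_of_le_of_lt ht₂ hs.1)
    rw [hν₂def, Measure.restrict_apply measurableSet_Ioc, hsub,
      Measure.smul_apply, smul_eq_mul, hwdef, withDensity_apply _ measurableSet_Ioc]
  -- for each T' > T, the restrictions agree
  have hrestr : ∀ T' : ℝ, T < T' →
      ν₂.restrict (Set.Ioi T') = ν₁.restrict (Set.Ioi T') := by
    intro T' hT'
    refine Measure.ext_of_Ioc' _ _ ?_ ?_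
    · -- finiteness
      intro p q hpq
      rw [Measure.restrict_apply measurableSet_Ioc]
      have : Set.Ioc p q ∩ Set.Ioi T' = Set.Ioc (max p T') q := by
        ext s
        simp only [Set.mem_inter_iff, Set.mem_Ioc, Set.mem_Ioi, max_lt_iff]
        tauto
      rw [this]
      rcases le_or_gt q (max p T') with h | h
      · rw [Set.Ioc_eq_empty (not_lt.mpr h), measure_empty]; exact ENNReal.zero_ne_top
      · have hM : ∀ s ∈ Set.Ioc (max p T') q, g s ≤ ENNReal.ofReal (c T' * Real.exp (-T')) := by
          intro s hs
          exact ENNReal.ofReal_le_ofReal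
            (hc_dec hT' (lt_trans hT' (lt_of_le_of_lt (le_max_right p T') hs.1))
              (le_of_lt (lt_of_le_of_lt (le_max_right p T') hs.1)))
        rw [hν₂Ioc _ _ (le_trans (le_of_lt hT') (le_max_right p T'))]
        refine ENNReal.mul_ne_top hK ?_
        have hle : ∫⁻ s in Set.Ioc (max p T') q, g s
            ≤ ∫⁻ _ in Set.Ioc (max p T') q, ENNReal.ofReal (c T' * Real.exp (-T')) :=
          setLIntegral_mono' measurableSet_Ioc hM
        refine ne_top_of_le_ne_top ?_ hle
        rw [setLIntegral_const]
        exact ENNReal.mul_ne_top ENNReal.ofReal_ne_top (by simp [Real.volume_Ioc])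
    · -- agreement on Ioc
      intro p q hpq
      rw [Measure.restrict_apply measurableSet_Ioc, Measure.restrict_apply measurableSet_Ioc]
      have hinter : Set.Ioc p q ∩ Set.Ioi T' = Set.Ioc (max p T') q := by
        ext s
        simp only [Set.mem_inter_iff, Set.mem_Ioc, Set.mem_Ioi, max_lt_iff]
        tauto
      rw [hinter]
      rcases le_or_gt q (max p T') with h | h
      · rw [Set.Ioc_eq_empty (not_lt.mpr h), measure_empty, measure_empty]
      · rw [hν₁Ioc, hν₂Ioc _ _ (le_trans (le_of_lt hT') (le_max_right p T'))]
        exact (hyp (max p T') q (le_trans (le_of_lt hT') (le_max_right p T')) h).symm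
  -- ν₁ lives on Ioi T
  have hν₁restr : ν₁.restrict (Set.Ioi T) = ν₁ := by
    rw [hν₁def, Measure.restrict_map hneg measurableSet_Ioi]
    have : (fun x => -ψ x) ⁻¹' Set.Ioi T = Set.univ := by
      ext x
      simp only [Set.mem_preimage, Set.mem_Ioi, Set.mem_univ, iff_true]
      linarith [hψ x]
    rw [this, Measure.restrict_univ]
  -- ν₁ = ν₂
  have hkey : ν₁ = ν₂ := by
    ext S hS
    have hSν₁ : ν₁ S = ν₁ (S ∩ Set.Ioi T) := by
      conv_lhs => rw [← hν₁restr]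
      rw [Measure.restrict_apply hS]
    have hSν₂ : ν₂ S = ν₂ (S ∩ Set.Ioi T) := by
      rw [hν₂def, Measure.restrict_apply hS,
        Measure.restrict_apply (hS.inter measurableSet_Ioi), Set.inter_assoc,
        Set.inter_self]
    rw [hSν₁, hSν₂]
    have hUnion : S ∩ Set.Ioi T = ⋃ n : ℕ, S ∩ Set.Ioi (T + 1 / (n + 1)) := by
      ext s
      simp only [Set.mem_inter_iff, Set.mem_iUnion, Set.mem_Ioi]
      constructor
      · rintro ⟨hsS, hsT⟩
        obtain ⟨n, hn⟩ := exists_nat_one_div_lt (sub_pos.mpr hsT)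
        exact ⟨n, hsS, by linarith⟩
      · rintro ⟨n, hsS, hn⟩
        have : (0:ℝ) < 1 / (n + 1) := by positivity
        exact ⟨hsS, by linarith⟩
    have hmono : Monotone fun n : ℕ => S ∩ Set.Ioi (T + 1 / (n + 1 : ℝ)) := by
      intro m n hmn
      refine Set.inter_subset_inter_right _ (Set.Ioi_subset_Ioi ?_)
      have h1 : (0:ℝ) < (m:ℝ) + 1 := by positivity
      have h2 : (m:ℝ) + 1 ≤ (n:ℝ) + 1 := by exact_mod_cast Nat.succ_le_succ hmn
      have := one_div_le_one_div_of_le h1 h2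
      linarith
    have heach : ∀ n : ℕ, ν₁ (S ∩ Set.Ioi (T + 1 / (n + 1 : ℝ)))
        = ν₂ (S ∩ Set.Ioi (T + 1 / (n + 1 : ℝ))) := by
      intro n
      have hTn : T < T + 1 / (n + 1 : ℝ) := by
        have : (0:ℝ) < 1 / (n + 1) := by positivity
        linarith
      have := hrestr _ hTn
      calc ν₁ (S ∩ Set.Ioi (T + 1 / (n + 1 : ℝ)))
          = (ν₁.restrict (Set.Ioi (T + 1 / (n + 1 : ℝ)))) S := by
            rw [Measure.restrict_apply hS]
        _ = (ν₂.restrict (Set.Ioi (T + 1 / (n + 1 : ℝ)))) S := by rw [this]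
        _ = ν₂ (S ∩ Set.Ioi (T + 1 / (n + 1 : ℝ))) := by
            rw [Measure.restrict_apply hS]
    rw [hUnion,
      (hmono.directed_le).measure_iUnion, (hmono.directed_le).measure_iUnion]
    exact iSup_congr heach
  -- the main transfer identity for subsets of Ioi T
  have main : ∀ S : Set ℝ, MeasurableSet S → S ⊆ Set.Ioi T →
      ∫⁻ x in (fun x => -ψ x) ⁻¹' S, G x * ENNReal.ofReal (a (-ψ x)) ∂μ
        = K * ∫⁻ s in S, ENNReal.ofReal (a s * Real.exp (-s)) := by
    intro S hS hSsub
    set f : ℝ → ℝ≥0∞ :=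
      S.indicator (fun s => ENNReal.ofReal (a s) / ENNReal.ofReal (c s)) with hfdef
    have hf_meas : Measurable f :=
      ((ENNReal.measurable_ofReal.comp ha_meas).div
        (ENNReal.measurable_ofReal.comp hc_meas)).indicator hS
    have hL : ∫⁻ s, f s ∂ν₁
        = ∫⁻ x in (fun x => -ψ x) ⁻¹' S, G x * ENNReal.ofReal (a (-ψ x)) ∂μ := by
      rw [hν₁def, lintegral_map hf_meas hneg]
      erw [lintegral_withDensity_eq_lintegral_mul μ hD_meas (hf_meas.comp hneg)]
      have hpt : ∀ x, (D * fun x => f (-ψ x)) x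
          = ((fun x => -ψ x) ⁻¹' S).indicator
              (fun x => G x * ENNReal.ofReal (a (-ψ x))) x := by
        intro x
        by_cases hx : -ψ x ∈ S
        · have hc' : 0 < c (-ψ x) := hc_pos _ (hSsub hx)
          have hx' : x ∈ (fun x => -ψ x) ⁻¹' S := hx
          simp only [Pi.mul_apply, hfdef, Set.indicator_of_mem hx, hDdef]
          rw [Set.indicator_of_mem hx', mul_assoc, ENNReal.mul_div_cancel
            (ENNReal.ofReal_pos.mpr hc').ne' ENNReal.ofReal_ne_top]
        · have hx' : x ∉ (fun x => -ψ x) ⁻¹' S := fun h => hx h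
          simp only [Pi.mul_apply, hfdef, Set.indicator_of_notMem hx, mul_zero]
          rw [Set.indicator_of_notMem hx']
      erw [lintegral_congr hpt]
      rw [lintegral_indicator (hneg hS) _]
    have hR : ∫⁻ s, f s ∂ν₂
        = K * ∫⁻ s in S, ENNReal.ofReal (a s * Real.exp (-s)) := by
      rw [hν₂def, hwdef, Measure.restrict_smul, lintegral_smul_measure,
        restrict_withDensity measurableSet_Ioi]
      erw [lintegral_withDensity_eq_lintegral_mul _ hg_meas hf_meas]
      congr 1
      have hpt : ∀ s, (g * f) s = S.indicator
          (fun s => g s * (ENNReal.ofReal (a s) / ENNReal.ofReal (c s))) s := by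
        intro s
        by_cases hs : s ∈ S
        · simp only [Pi.mul_apply, hfdef, Set.indicator_of_mem hs]
        · simp only [Pi.mul_apply, hfdef, Set.indicator_of_notMem hs, mul_zero]
      rw [lintegral_congr hpt, lintegral_indicator hS _,
        Measure.restrict_restrict hS, Set.inter_eq_self_of_subset_left hSsub]
      refine setLIntegral_congr_fun hS ?_
      intro s hs
      have hsT : T < s := hSsub hs
      have hc' : 0 < c s := hc_pos _ hsT
      have ha' : 0 ≤ a s := ha_nonneg _ hsT
      rw [hgdef]
      simp only
      rw [ENNReal.ofReal_mul hc'.le, ENNReal.ofReal_mul ha',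
        mul_comm (ENNReal.ofReal (c s)) (ENNReal.ofReal (Real.exp (-s))), mul_assoc,
        ENNReal.mul_div_cancel (ENNReal.ofReal_pos.mpr hc').ne' ENNReal.ofReal_ne_top,
        mul_comm]
    rw [← hL, hkey, hR]
  constructor
  · intro t₂ t₁ ht₂ ht
    have := main (Set.Ioc t₂ t₁) measurableSet_Ioc
      (fun s hs => lt_of_le_of_lt ht₂ hs.1)
    rwa [hpre_Ioc] at this
  · intro t₂ ht₂
    have hpre : (fun x => -ψ x) ⁻¹' Set.Ioi t₂ = {x | ψ x < -t₂} := by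
      ext x
      simp only [Set.mem_preimage, Set.mem_Ioi, Set.mem_setOf_eq]
      constructor <;> intro h <;> linarith
    have := main (Set.Ioi t₂) measurableSet_Ioi
      (fun s hs => lt_of_le_of_lt ht₂ hs)
    rwa [hpre] at this
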